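/- I(3; 0, +∞) := −∫_0^∞ (ln v)³ e^{−v} dv = 2ζ(3) + γ³ + γπ²/2, where γ is the Euler–Mascheroni constant and ζ the Riemann zeta function. -/

import Mathlib

open MeasureTheory Real Set Filter Topology Asymptotics

local notation "γ" => Real.eulerMascheroniConstant



noncomputable def gI (k : ℕ) (x : ℝ) : ℝ :=
  ∫ t in Set.Ioi (0:ℝ), t ^ (x - 1) * ((Real.log t) ^ k * Real.exp (-t))

noncomputable def fC (k : ℕ) (t : ℝ) : ℂ :=
  (((Real.log t) ^ k * Real.exp (-t) : ℝ) : ℂ)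

lemma fC_norm (k : ℕ) {t : ℝ} : ‖fC k t‖ = |Real.log t| ^ k * Real.exp (-t) := by
  rw [fC, Complex.norm_real, Real.norm_eq_abs, abs_mul, abs_pow, abs_of_pos (exp_pos _)]

lemma fC_top (k : ℕ) (a : ℝ) : (fC k) =O[atTop] (fun t : ℝ => t ^ (-a)) := by
  have h1 : (fC k) =O[atTop] (fun t : ℝ => t ^ (k:ℝ) * Real.exp (-1 * t)) := by
    rw [isBigO_iff]
    refine ⟨1, ?_⟩
    filter_upwards [eventually_ge_atTop 1] with t ht
    have h0 : (0:ℝ) < t := lt_of_lt_of_le one_pos ht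
    have hlog : |Real.log t| ≤ t := by
      rw [abs_of_nonneg (log_nonneg ht)]
      linarith [Real.log_le_sub_one_of_pos h0]
    rw [fC_norm, one_mul, Real.norm_eq_abs, neg_one_mul, abs_mul, abs_of_pos (exp_pos _),
      abs_of_pos (rpow_pos_of_pos h0 _), rpow_natCast]
    gcongr
  refine h1.trans ?_
  have h2 := (isBigO_refl (fun t : ℝ => t ^ (k:ℝ)) atTop).mul
    (isLittleO_exp_neg_mul_rpow_atTop one_pos (-a - k)).isBigO
  refine h2.congr' EventuallyEq.rfl ?_
  filter_upwards [eventually_gt_atTop 0] with t ht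
  rw [← rpow_add ht]
  norm_num

lemma fC_bot (k : ℕ) {b : ℝ} (hb : 0 < b) : (fC k) =O[𝓝[>] (0:ℝ)] (fun t : ℝ => t ^ (-b)) := by
  have h1 : (fC k) =O[𝓝[>] (0:ℝ)] (fun t : ℝ => |Real.log t| ^ (k:ℝ)) := by
    rw [isBigO_iff]
    refine ⟨1, ?_⟩
    filter_upwards [self_mem_nhdsWithin] with t (ht : 0 < t)
    rw [fC_norm, one_mul, Real.norm_eq_abs, abs_of_nonneg (rpow_nonneg (abs_nonneg _) _),
      rpow_natCast]
    exact mul_le_of_le_one_right (by positivity) (Real.exp_le_one_iff.mpr (by linarith))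
  exact h1.trans (isLittleO_abs_log_rpow_rpow_nhdsGT_zero (k:ℝ) (neg_neg_iff_pos.mpr hb)).isBigO

lemma fC_loc (k : ℕ) : LocallyIntegrableOn (fC k) (Set.Ioi 0) := by
  refine ContinuousOn.locallyIntegrableOn ?_ measurableSet_Ioi
  refine Complex.continuous_ofReal.comp_continuousOn ?_
  exact ((Real.continuousOn_log.mono (fun t ht => ne_of_gt ht)).pow k).mul
    (Real.continuous_exp.comp continuous_neg).continuousOn

lemma mellin_fC (k : ℕ) (x : ℝ) : mellin (fC k) (x : ℂ) = ((gI k x : ℝ) : ℂ) := by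
  rw [mellin, gI]
  refine Eq.trans (setIntegral_congr_fun measurableSet_Ioi (fun t ht => ?_)) integral_ofReal
  rw [fC, smul_eq_mul]
  rw [show ((x:ℂ) - 1) = ((x - 1 : ℝ) : ℂ) by push_cast; ring]
  rw [← Complex.ofReal_cpow (le_of_lt ht)]
  push_cast
  rw [← Complex.ofReal_neg, ← Complex.ofReal_exp]
  norm_cast

lemma fC_succ (k : ℕ) : (fun t => Real.log t • fC k t) = fC (k + 1) := by
  funext t
  rw [fC, fC, Complex.real_smul]
  push_cast
  ring

lemma hasDerivAt_gI (k : ℕ) {x : ℝ} (hx : 0 < x) :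
    HasDerivAt (gI k) (gI (k+1) x) x := by
  have hd := (mellin_hasDerivAt_of_isBigO_rpow (a := x + 1) (b := x / 2) (s := (x:ℂ))
    (fC_loc k) (fC_top k (x+1)) (by rw [Complex.ofReal_re]; linarith)
    (fC_bot k (half_pos hx)) (by rw [Complex.ofReal_re]; linarith)).2
  rw [fC_succ k] at hd
  have h2 := hd.real_of_complex
  have he : (fun y : ℝ => (mellin (fC k) (y:ℂ)).re) = gI k := by
    funext y; rw [mellin_fC, Complex.ofReal_re]
  rw [he, mellin_fC, Complex.ofReal_re] at h2
  exact h2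

lemma gI_zero_eq_Gamma {x : ℝ} (hx : 0 < x) : gI 0 x = Real.Gamma x := by
  rw [Real.Gamma_eq_integral hx, gI]
  refine setIntegral_congr_fun measurableSet_Ioi (fun t ht => ?_)
  simp [mul_comm]



lemma gI_zero_pos {x : ℝ} (hx : 0 < x) : 0 < gI 0 x := by
  rw [gI_zero_eq_Gamma hx]; exact Real.Gamma_pos_of_pos hx

lemma hasDerivAt_Gamma' {x : ℝ} (hx : 0 < x) : HasDerivAt Real.Gamma (gI 1 x) x := by
  refine (hasDerivAt_gI 0 hx).congr_of_eventuallyEq ?_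
  filter_upwards [isOpen_Ioi.mem_nhds (show x ∈ Ioi (0:ℝ) from hx)] with y hy
  exact (gI_zero_eq_Gamma hy).symm

lemma gI_one_one : gI 1 1 = -γ :=
  (hasDerivAt_Gamma' one_pos).unique Real.hasDerivAt_Gamma_one

lemma deriv_step {u v u' v' : ℝ → ℝ} (he : ∀ x, 0 < x → u x = v x)
    (hu : ∀ x, 0 < x → HasDerivAt u (u' x) x) (hv : ∀ x, 0 < x → HasDerivAt v (v' x) x) :
    ∀ x, 0 < x → u' x = v' x := by
  intro x hx
  refine HasDerivAt.unique ?_ (hv x hx)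
  refine (hu x hx).congr_of_eventuallyEq ?_
  filter_upwards [isOpen_Ioi.mem_nhds (show x ∈ Ioi (0:ℝ) from hx)] with y hy
  exact (he y hy).symm

lemma e0 : ∀ x : ℝ, 0 < x → gI 0 (x + 1) = x * gI 0 x := by
  intro x hx
  rw [gI_zero_eq_Gamma (by linarith), gI_zero_eq_Gamma hx]
  exact Real.Gamma_add_one hx.ne'

lemma hasDerivAt_shift (k : ℕ) {x : ℝ} (hx : 0 < x) :
    HasDerivAt (fun y => gI k (y + 1)) (gI (k+1) (x+1)) x :=
  HasDerivAt.comp_add_const x 1 (hasDerivAt_gI k (by linarith))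

lemma e1 : ∀ x : ℝ, 0 < x → gI 1 (x + 1) = gI 0 x + x * gI 1 x := by
  refine deriv_step e0 (fun x hx => hasDerivAt_shift 0 hx) (fun x hx => ?_)
  simpa using (hasDerivAt_id x).fun_mul (hasDerivAt_gI 0 hx)

lemma e2 : ∀ x : ℝ, 0 < x → gI 2 (x + 1) = 2 * gI 1 x + x * gI 2 x := by
  refine deriv_step e1 (fun x hx => hasDerivAt_shift 1 hx) (fun x hx => ?_)
  have := (hasDerivAt_gI 0 hx).fun_add ((hasDerivAt_id x).fun_mul (hasDerivAt_gI 1 hx))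
  refine this.congr_deriv ?_
  simp [id]
  ring

lemma e3 : ∀ x : ℝ, 0 < x → gI 3 (x + 1) = 3 * gI 2 x + x * gI 3 x := by
  refine deriv_step e2 (fun x hx => hasDerivAt_shift 2 hx) (fun x hx => ?_)
  have := ((hasDerivAt_gI 1 hx).const_mul 2).fun_add ((hasDerivAt_id x).fun_mul (hasDerivAt_gI 2 hx))
  refine this.congr_deriv ?_
  simp [id]
  ring

noncomputable def ψf (x : ℝ) : ℝ := gI 1 x / gI 0 x
noncomputable def Pf (x : ℝ) : ℝ := (gI 2 x * gI 0 x - (gI 1 x)^2) / (gI 0 x)^2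
noncomputable def Qf (x : ℝ) : ℝ :=
  (gI 3 x * (gI 0 x)^2 - 3 * gI 2 x * gI 1 x * gI 0 x + 2 * (gI 1 x)^3) / (gI 0 x)^3

lemma hasDerivAt_ψf {x : ℝ} (hx : 0 < x) : HasDerivAt ψf (Pf x) x := by
  have h := (hasDerivAt_gI 1 hx).fun_div (hasDerivAt_gI 0 hx) (gI_zero_pos hx).ne'
  refine h.congr_deriv ?_
  rw [Pf]
  ring

lemma hasDerivAt_Pf {x : ℝ} (hx : 0 < x) : HasDerivAt Pf (Qf x) x := by
  have h0 := gI_zero_pos hx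
  have hN : HasDerivAt (fun y => gI 2 y * gI 0 y - (gI 1 y)^2)
      (gI 3 x * gI 0 x + gI 2 x * gI 1 x - 2 * gI 1 x ^ 1 * gI 2 x) x :=
    ((hasDerivAt_gI 2 hx).fun_mul (hasDerivAt_gI 0 hx)).fun_sub ((hasDerivAt_gI 1 hx).fun_pow 2)
  have hD : HasDerivAt (fun y => (gI 0 y)^2) (2 * gI 0 x ^ 1 * gI 1 x) x :=
    (hasDerivAt_gI 0 hx).fun_pow 2
  have h := hN.fun_div hD (by positivity)
  refine h.congr_deriv ?_
  rw [Qf]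
  field_simp
  ring

lemma ψf_rec {x : ℝ} (hx : 0 < x) : ψf (x + 1) = ψf x + 1 / x := by
  rw [ψf, ψf, e1 x hx, e0 x hx]
  field_simp [(gI_zero_pos hx).ne']
  ring

lemma Pf_rec {x : ℝ} (hx : 0 < x) : Pf (x + 1) = Pf x - 1 / x^2 := by
  rw [Pf, Pf, e2 x hx, e1 x hx, e0 x hx]
  field_simp [(gI_zero_pos hx).ne']
  ring

lemma Qf_rec {x : ℝ} (hx : 0 < x) : Qf (x + 1) = Qf x + 2 / x^3 := by
  rw [Qf, Qf, e3 x hx, e2 x hx, e1 x hx, e0 x hx]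
  field_simp [(gI_zero_pos hx).ne']
  ring

lemma ψf_mono : ∀ x y : ℝ, 0 < x → x < y → ψf x ≤ ψf y := by
  intro x y hx hxy
  have hy : 0 < y := hx.trans hxy
  have hder : ∀ z : ℝ, 0 < z → HasDerivAt (fun w => Real.log (Real.Gamma w)) (ψf z) z := by
    intro z hz
    have := (hasDerivAt_Gamma' hz).log (Real.Gamma_pos_of_pos hz).ne'
    rw [show gI 1 z / Real.Gamma z = ψf z by rw [ψf, gI_zero_eq_Gamma hz]] at this
    exact this
  have hc := Real.convexOn_log_Gamma
  calc ψf x = deriv (fun w => Real.log (Real.Gamma w)) x := ((hder x hx).deriv).symm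
    _ ≤ slope (fun w => Real.log (Real.Gamma w)) x y :=
        hc.deriv_le_slope hx hy hxy (hder x hx).differentiableAt
    _ ≤ deriv (fun w => Real.log (Real.Gamma w)) y :=
        hc.slope_le_deriv hx hy hxy (hder y hy).differentiableAt
    _ = ψf y := (hder y hy).deriv

lemma deriv_nonneg_right {h : ℝ → ℝ} {d x : ℝ} (hd : HasDerivAt h d x)
    (hm : ∀ y, x < y → h x ≤ h y) : 0 ≤ d := by
  have ht : Tendsto (slope h x) (𝓝[>] x) (𝓝 d) := by
    have := (hd.hasDerivWithinAt (s := Ioi x))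
    rw [hasDerivWithinAt_iff_tendsto_slope] at this
    rwa [Set.diff_singleton_eq_self notMem_Ioi_self] at this
  refine ge_of_tendsto ht ?_
  filter_upwards [self_mem_nhdsWithin] with y (hy : x < y)
  rw [slope_def_field]
  exact div_nonneg (by linarith [hm y hy]) (by linarith)

lemma deriv_nonpos_right {h : ℝ → ℝ} {d x : ℝ} (hd : HasDerivAt h d x)
    (hm : ∀ y, x < y → h y ≤ h x) : d ≤ 0 := by
  have : 0 ≤ -d := deriv_nonneg_right hd.neg (fun y hy => by simp [hm y hy])
  linarith

lemma Pf_nonneg {x : ℝ} (hx : 0 < x) : 0 ≤ Pf x :=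
  deriv_nonneg_right (hasDerivAt_ψf hx) (fun y hy => ψf_mono x y hx hy)

lemma contAt_Qf {x : ℝ} (hx : 0 < x) : ContinuousAt Qf x := by
  have h : ∀ k, ContinuousAt (gI k) x := fun k => (hasDerivAt_gI k hx).continuousAt
  have hne : (gI 0 x)^3 ≠ 0 := pow_ne_zero 3 (gI_zero_pos hx).ne'
  exact ContinuousAt.div
    ((((h 3).mul ((h 0).pow 2)).sub (((continuousAt_const.mul (h 2)).mul (h 1)).mul (h 0))).add
      (continuousAt_const.mul ((h 1).pow 3)))
    ((h 0).pow 3) hne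



noncomputable def Tf (x : ℝ) : ℝ := ∑' k : ℕ, 1 / (x + k)^2
noncomputable def Uf (x : ℝ) : ℝ := ∑' k : ℕ, 2 / (x + k)^3

lemma summable_aux {x : ℝ} (hx : 0 < x) {p : ℕ} (hp : 1 < p) (c : ℝ) :
    Summable (fun k : ℕ => c / (x + k)^p) := by
  have hbase : Summable (fun k : ℕ => 1 / ((k:ℝ) + 1)^p) := by
    have := (summable_nat_add_iff (f := fun n : ℕ => 1 / (n:ℝ)^p) 1).mpr
      (Real.summable_one_div_nat_pow.mpr hp)
    refine this.congr (fun k => by push_cast; ring_nf)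
  set m : ℝ := min x 1 with hm
  have hm0 : 0 < m := lt_min hx one_pos
  refine Summable.of_norm ?_
  have : Summable (fun k : ℕ => (|c| / m^p) * (1 / ((k:ℝ) + 1)^p)) := hbase.mul_left _
  refine Summable.of_nonneg_of_le (fun k => norm_nonneg _) (fun k => ?_) this
  have hxk : m * ((k:ℝ) + 1) ≤ x + k := by
    have h1 : m ≤ x := min_le_left _ _
    have h2 : m ≤ 1 := min_le_right _ _
    nlinarith [Nat.cast_nonneg (α := ℝ) k]
  have hxk0 : (0:ℝ) < x + k := by positivity
  rw [Real.norm_eq_abs, abs_div, abs_pow, abs_of_pos hxk0]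
  rw [div_mul_div_comm, mul_one, ← mul_pow]
  gcongr


lemma Tf_rec {x : ℝ} (hx : 0 < x) : Tf (x + 1) = Tf x - 1 / x^2 := by
  have h : Tf x = 1/x^2 + Tf (x+1) := by
    rw [Tf, Tf, Summable.tsum_eq_zero_add (summable_aux hx (p := 2) one_lt_two 1)]
    congr 1
    · norm_num
    · exact tsum_congr (fun k => by rw [show x+1+(k:ℝ) = x + ((k+1:ℕ):ℝ) by push_cast; ring])
  linarith

lemma Uf_rec {x : ℝ} (hx : 0 < x) : Uf (x + 1) = Uf x - 2 / x^3 := by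
  have h : Uf x = 2/x^3 + Uf (x+1) := by
    rw [Uf, Uf, Summable.tsum_eq_zero_add (summable_aux hx (p := 3) (by norm_num) 2)]
    congr 1
    · norm_num
    · exact tsum_congr (fun k => by rw [show x+1+(k:ℝ) = x + ((k+1:ℕ):ℝ) by push_cast; ring])
  linarith

lemma Tf_nonneg {x : ℝ} (hx : 0 < x) : 0 ≤ Tf x :=
  tsum_nonneg (fun k => by positivity)

lemma Uf_nonneg {x : ℝ} (hx : 0 < x) : 0 ≤ Uf x :=
  tsum_nonneg (fun k => by positivity)

lemma telescope_sum {y : ℝ} (hy : 1 < y) :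
    HasSum (fun k : ℕ => 1/(y - 1 + k) - 1/(y + k)) (1/(y-1)) := by
  have hpos : ∀ k : ℕ, (0:ℝ) < y - 1 + k := fun k => by
    have := Nat.cast_nonneg (α := ℝ) k; linarith
  have hnn : ∀ k : ℕ, 0 ≤ 1/(y - 1 + k) - 1/(y + k) := by
    intro k
    have h1 : (0:ℝ) < y + k := by have := hpos k; linarith
    rw [sub_nonneg]
    exact one_div_le_one_div_of_le (hpos k) (by linarith)
  rw [hasSum_iff_tendsto_nat_of_nonneg hnn]
  have hps : ∀ n : ℕ, ∑ i ∈ Finset.range n, (1/(y - 1 + i) - 1/(y + i))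
      = 1/(y-1) - 1/(y-1+n) := by
    intro n
    have := Finset.sum_range_sub' (f := fun i : ℕ => 1/(y - 1 + (i:ℝ))) n
    rw [show ∑ i ∈ Finset.range n, (1/(y - 1 + (i:ℝ)) - 1/(y + i))
        = ∑ i ∈ Finset.range n, (1/(y - 1 + (i:ℝ)) - 1/(y - 1 + ((i+1:ℕ):ℝ))) from
      Finset.sum_congr rfl fun i _ => by push_cast; ring_nf]
    rw [this]
    norm_num
  simp_rw [hps]
  nth_rewrite 2 [show 1/(y-1) = 1/(y-1) - 0 by ring]
  refine Tendsto.sub tendsto_const_nhds ?_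
  simp_rw [one_div]
  refine Tendsto.inv_tendsto_atTop ?_
  exact tendsto_atTop_add_const_left _ _ (tendsto_natCast_atTop_atTop)

lemma Tf_le {y : ℝ} (hy : 1 < y) : Tf y ≤ 1/(y-1) := by
  rw [Tf, ← (telescope_sum hy).tsum_eq]
  refine Summable.tsum_le_tsum (fun k => ?_) (summable_aux (by linarith) one_lt_two 1)
    (telescope_sum hy).summable
  have hk : (0:ℝ) ≤ k := Nat.cast_nonneg k
  have h1 : (0:ℝ) < y - 1 + k := by linarith
  have h2 : (0:ℝ) < y + k := by linarith
  have heq : 1/(y-1+(k:ℝ)) - 1/(y+k) = 1/((y-1+k)*(y+k)) := by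
    field_simp
    ring
  rw [heq]
  exact one_div_le_one_div_of_le (by positivity) (by nlinarith)

lemma Uf_le {y : ℝ} (hy : 1 < y) : Uf y ≤ 2/(y-1) := by
  have h2 := (telescope_sum hy).mul_left 2
  rw [Uf, show 2/(y-1) = 2 * (1/(y-1)) by ring, ← h2.tsum_eq]
  refine Summable.tsum_le_tsum (fun k => ?_) (summable_aux (by linarith) (by norm_num) 2)
    h2.summable
  have hk : (0:ℝ) ≤ k := Nat.cast_nonneg k
  have h1 : (0:ℝ) < y - 1 + k := by linarith
  have hyk : (0:ℝ) < y + k := by linarith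
  have heq : 2 * (1/(y-1+(k:ℝ)) - 1/(y+k)) = 2 * (1/((y-1+k)*(y+k))) := by
    field_simp
    ring
  rw [heq, show (2:ℝ)/(y+(k:ℝ))^3 = 2 * (1/(y+k)^3) by ring]
  have ha : (1:ℝ) ≤ y + k := by linarith
  have h23 : (y+(k:ℝ))^2 ≤ (y+k)^3 := pow_le_pow_right₀ ha (by norm_num)
  have hle : (y-1+(k:ℝ))*(y+k) ≤ (y+k)^3 := by nlinarith
  have := one_div_le_one_div_of_le (by positivity : (0:ℝ) < (y-1+(k:ℝ))*(y+k)) hle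
  linarith

section Iter

lemma pos_of_one_le_add_nat {x : ℝ} (hx : 1 ≤ x) (n : ℕ) : 0 < x + n := by
  have := Nat.cast_nonneg (α := ℝ) n; linarith

lemma Pf_iter (n : ℕ) {x : ℝ} (hx : 1 ≤ x) :
    Pf (x + n) = Pf x - ∑ k ∈ Finset.range n, 1/(x+k)^2 := by
  induction n with
  | zero => simp
  | succ n ih =>
    rw [show x + ((n+1:ℕ):ℝ) = (x + n) + 1 by push_cast; ring,
      Pf_rec (pos_of_one_le_add_nat hx n), ih, Finset.sum_range_succ]
    ring

lemma Tf_iter (n : ℕ) {x : ℝ} (hx : 1 ≤ x) :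
    Tf (x + n) = Tf x - ∑ k ∈ Finset.range n, 1/(x+k)^2 := by
  induction n with
  | zero => simp
  | succ n ih =>
    rw [show x + ((n+1:ℕ):ℝ) = (x + n) + 1 by push_cast; ring,
      Tf_rec (pos_of_one_le_add_nat hx n), ih, Finset.sum_range_succ]
    ring

lemma Qf_iter (n : ℕ) {x : ℝ} (hx : 1 ≤ x) :
    Qf (x + n) = Qf x + ∑ k ∈ Finset.range n, 2/(x+k)^3 := by
  induction n with
  | zero => simp
  | succ n ih =>
    rw [show x + ((n+1:ℕ):ℝ) = (x + n) + 1 by push_cast; ring,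
      Qf_rec (pos_of_one_le_add_nat hx n), ih, Finset.sum_range_succ]
    ring

lemma Uf_iter (n : ℕ) {x : ℝ} (hx : 1 ≤ x) :
    Uf (x + n) = Uf x - ∑ k ∈ Finset.range n, 2/(x+k)^3 := by
  induction n with
  | zero => simp
  | succ n ih =>
    rw [show x + ((n+1:ℕ):ℝ) = (x + n) + 1 by push_cast; ring,
      Uf_rec (pos_of_one_le_add_nat hx n), ih, Finset.sum_range_succ]
    ring

end Iter

section Cont

lemma contOn_Tf : ContinuousOn Tf (Icc 1 2) := by
  have hTc : Continuous (fun x : ℝ => ∑' k : ℕ, 1/((max x 1) + k)^2) := by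
    refine continuous_tsum (u := fun k : ℕ => 1/((1:ℝ)+k)^2) (fun k => ?_) ?_ ?_
    · refine Continuous.div continuous_const
        ((((continuous_id.max continuous_const)).add continuous_const).pow 2) (fun x => ?_)
      have h1 : (1:ℝ) ≤ max x 1 := le_max_right _ _
      positivity
    · have := summable_aux (x := 1) one_pos (p := 2) one_lt_two 1
      exact this.congr (fun k => by norm_num)
    · intro k x
      have h1 : (1:ℝ) ≤ max x 1 := le_max_right _ _
      have hk : (0:ℝ) ≤ k := Nat.cast_nonneg k
      rw [Real.norm_eq_abs, abs_of_pos (by positivity)]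
      exact one_div_le_one_div_of_le (by positivity)
        (pow_le_pow_left₀ (by positivity) (by linarith) 2)
  refine hTc.continuousOn.congr (fun x hx => ?_)
  simp [Tf, max_eq_left hx.1]

lemma contOn_Uf : ContinuousOn Uf (Icc 1 2) := by
  have hTc : Continuous (fun x : ℝ => ∑' k : ℕ, 2/((max x 1) + k)^3) := by
    refine continuous_tsum (u := fun k : ℕ => 2/((1:ℝ)+k)^3) (fun k => ?_) ?_ ?_
    · refine Continuous.div continuous_const
        ((((continuous_id.max continuous_const)).add continuous_const).pow 3) (fun x => ?_)
      have h1 : (1:ℝ) ≤ max x 1 := le_max_right _ _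
      positivity
    · have := summable_aux (x := 1) one_pos (p := 3) (by norm_num) 2
      exact this.congr (fun k => by norm_num)
    · intro k x
      have h1 : (1:ℝ) ≤ max x 1 := le_max_right _ _
      have hk : (0:ℝ) ≤ k := Nat.cast_nonneg k
      rw [Real.norm_eq_abs, abs_of_pos (by positivity)]
      have h3 : (1+(k:ℝ))^3 ≤ (max x 1 + k)^3 := pow_le_pow_left₀ (by positivity) (by linarith) 3
      have := one_div_le_one_div_of_le (by positivity : (0:ℝ) < (1+(k:ℝ))^3) h3
      rw [div_le_div_iff₀ (by positivity) (by positivity)] at *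
      nlinarith
  refine hTc.continuousOn.congr (fun x hx => ?_)
  simp [Uf, max_eq_left hx.1]

lemma contOn_Pf {s : Set ℝ} (hs : s ⊆ Ioi 0) : ContinuousOn Pf s :=
  fun x hx => ((hasDerivAt_Pf (hs hx)).continuousAt).continuousWithinAt

lemma contOn_Qf {s : Set ℝ} (hs : s ⊆ Ioi 0) : ContinuousOn Qf s :=
  fun x hx => (contAt_Qf (hs hx)).continuousWithinAt

end Cont

section FTC

lemma integ_P {a b : ℝ} (ha : 0 < a) (hab : a ≤ b) :
    ∫ x in a..b, Pf x = ψf b - ψf a := by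
  refine intervalIntegral.integral_eq_sub_of_hasDerivAt (fun x hx => hasDerivAt_ψf ?_) ?_
  · rw [uIcc_of_le hab] at hx
    linarith [hx.1]
  · refine (contOn_Pf ?_).intervalIntegrable
    rw [uIcc_of_le hab]
    intro x hx
    exact lt_of_lt_of_le ha hx.1

lemma integ_Q {a b : ℝ} (ha : 0 < a) (hab : a ≤ b) :
    ∫ x in a..b, Qf x = Pf b - Pf a := by
  refine intervalIntegral.integral_eq_sub_of_hasDerivAt (fun x hx => hasDerivAt_Pf ?_) ?_
  · rw [uIcc_of_le hab] at hx
    linarith [hx.1]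
  · refine (contOn_Qf ?_).intervalIntegrable
    rw [uIcc_of_le hab]
    intro x hx
    exact lt_of_lt_of_le ha hx.1

end FTC

lemma eq_zero_of_integral_nonpos {F : ℝ → ℝ} {a b : ℝ} (hab : a < b)
    (hc : ContinuousOn F (Icc a b)) (h0 : ∀ x ∈ Icc a b, 0 ≤ F x)
    (hI : ∫ x in a..b, F x ≤ 0) : ∀ x ∈ Ico a b, F x = 0 := by
  intro x₀ hx₀
  by_contra hne
  have hpos : 0 < F x₀ := lt_of_le_of_ne (h0 x₀ (Ico_subset_Icc_self hx₀)) (Ne.symm hne)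
  have hcw : ContinuousWithinAt F (Icc a b) x₀ := hc x₀ (Ico_subset_Icc_self hx₀)
  have hev : ∀ᶠ y in 𝓝[Icc a b] x₀, F x₀/2 < F y :=
    hcw.eventually (eventually_gt_nhds (half_lt_self hpos))
  rw [eventually_nhdsWithin_iff] at hev
  obtain ⟨ε, hε, hball⟩ := Metric.eventually_nhds_iff.mp hev
  set c := min (x₀ + ε/2) b with hc_def
  have hx₀c : x₀ < c := lt_min (by linarith) hx₀.2
  have hcb : c ≤ b := min_le_right _ _
  have hax₀ : a ≤ x₀ := hx₀.1
  have hFc : ∀ y ∈ Icc x₀ c, F x₀/2 ≤ F y := by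
    intro y hy
    refine le_of_lt (hball ?_ ⟨le_trans hax₀ hy.1, le_trans hy.2 hcb⟩)
    rw [Real.dist_eq, abs_of_nonneg (by linarith [hy.1])]
    have : y ≤ x₀ + ε/2 := le_trans hy.2 (min_le_left _ _)
    linarith
  have hint : ∀ u v : ℝ, a ≤ u → u ≤ v → v ≤ b → IntervalIntegrable F volume u v := by
    intro u v hu huv hv
    refine (hc.mono ?_).intervalIntegrable
    rw [uIcc_of_le huv]
    exact Icc_subset_Icc hu hv
  have key : (c - x₀) * (F x₀/2) ≤ ∫ x in x₀..c, F x := by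
    have h1 : ∫ x in x₀..c, F x₀/2 = (c - x₀) * (F x₀/2) := by
      rw [intervalIntegral.integral_const, smul_eq_mul]
    rw [← h1]
    refine intervalIntegral.integral_mono_on hx₀c.le intervalIntegrable_const
      (hint x₀ c hax₀ hx₀c.le hcb) (fun y hy => hFc y hy)
  have h1 : 0 ≤ ∫ x in a..x₀, F x :=
    intervalIntegral.integral_nonneg hax₀ (fun u hu => h0 u ⟨hu.1, le_trans hu.2 hx₀.2.le⟩)
  have h2 : 0 ≤ ∫ x in c..b, F x :=
    intervalIntegral.integral_nonneg hcb (fun u hu => h0 u ⟨le_trans (le_trans hax₀ hx₀c.le) hu.1, hu.2⟩)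
  have hsplit : ∫ x in a..b, F x = (∫ x in a..x₀, F x) + (∫ x in x₀..c, F x) + (∫ x in c..b, F x) := by
    rw [intervalIntegral.integral_add_adjacent_intervals
      (hint a x₀ le_rfl hax₀ (le_trans hx₀c.le hcb))
      (hint x₀ c hax₀ hx₀c.le hcb),
      intervalIntegral.integral_add_adjacent_intervals
      (hint a c le_rfl (le_trans hax₀ hx₀c.le) hcb) (hint c b (le_trans hax₀ hx₀c.le) hcb le_rfl)]
  nlinarith [key, h1, h2]

section Main

lemma T_partial_le {x : ℝ} (hx : 0 < x) (n : ℕ) :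
    ∑ k ∈ Finset.range n, 1/(x+k)^2 ≤ Tf x :=
  Summable.sum_le_tsum (Finset.range n) (fun k _ => by positivity) (summable_aux hx one_lt_two 1)

lemma T_le_P {x : ℝ} (hx : 1 ≤ x) : Tf x ≤ Pf x := by
  have hx0 : (0:ℝ) < x := by linarith
  refine Summable.tsum_le_of_sum_le (summable_aux hx0 one_lt_two 1) (fun s => ?_)
  have hsub := Finset.subset_range_sup_succ s
  calc ∑ k ∈ s, 1/(x+k)^2
      ≤ ∑ k ∈ Finset.range ((s.sup id).succ), 1/(x+k)^2 :=
        Finset.sum_le_sum_of_subset_of_nonneg hsub (fun k _ _ => by positivity)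
    _ = Pf x - Pf (x + ((s.sup id).succ : ℕ)) := by rw [Pf_iter _ hx]; ring
    _ ≤ Pf x := by linarith [Pf_nonneg (pos_of_one_le_add_nat hx ((s.sup id).succ))]

lemma P_eq_T_Ico : ∀ x ∈ Ico (1:ℝ) 2, Pf x = Tf x := by
  have key : ∀ x ∈ Ico (1:ℝ) 2, Pf x - Tf x = 0 := by
    refine eq_zero_of_integral_nonpos one_lt_two
      ((contOn_Pf (fun y hy => lt_of_lt_of_le one_pos hy.1)).sub contOn_Tf)
      (fun x hx => by linarith [T_le_P hx.1]) ?_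
    have hb : ∀ n : ℕ, (∫ x in (1:ℝ)..2, (Pf x - Tf x)) ≤ 1/(1+(n:ℝ)) := by
      intro n
      have hmono : ∀ x ∈ Icc (1:ℝ) 2, Pf x - Tf x ≤ Pf (x + n) := by
        intro x hx
        rw [Pf_iter n hx.1]
        linarith [T_partial_le (show (0:ℝ) < x by linarith [hx.1]) n]
      have hIm : (∫ x in (1:ℝ)..2, (Pf x - Tf x)) ≤ ∫ x in (1:ℝ)..2, Pf (x + n) := by
        refine intervalIntegral.integral_mono_on one_le_two
          (ContinuousOn.intervalIntegrable (by rw [uIcc_of_le one_le_two]; exact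
            (contOn_Pf (fun y hy => lt_of_lt_of_le one_pos hy.1)).sub contOn_Tf))
          ?_ hmono
        refine ContinuousOn.intervalIntegrable ?_
        intro x hx
        rw [uIcc_of_le one_le_two] at hx
        exact ((HasDerivAt.comp_add_const x (n:ℝ)
          (hasDerivAt_Pf (by have := Nat.cast_nonneg (α := ℝ) n; linarith [hx.1]))).continuousAt).continuousWithinAt
      have hshift : (∫ x in (1:ℝ)..2, Pf (x + n)) = ∫ x in (1+(n:ℝ))..(2+(n:ℝ)), Pf x :=
        intervalIntegral.integral_comp_add_right (fun x => Pf x) (n:ℝ)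
      have hn0 : (0:ℝ) < 1 + n := by positivity
      have hval : (∫ x in (1+(n:ℝ))..(2+(n:ℝ)), Pf x) = 1/(1+(n:ℝ)) := by
        rw [integ_P hn0 (by linarith)]
        have := ψf_rec hn0
        rw [show (2:ℝ)+(n:ℝ) = (1+(n:ℝ))+1 by ring, this]
        ring
      rw [hshift, hval] at hIm
      exact hIm
    have hten : Tendsto (fun n : ℕ => 1/(1+(n:ℝ))) atTop (𝓝 0) := by
      simp_rw [one_div]
      exact Tendsto.inv_tendsto_atTop (tendsto_atTop_add_const_left _ _ tendsto_natCast_atTop_atTop)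
    exact ge_of_tendsto hten (Eventually.of_forall hb)
  intro x hx
  linarith [key x hx]

lemma P_eq_T {y : ℝ} (hy : 1 ≤ y) : Pf y = Tf y := by
  set n := Nat.floor (y - 1) with hn
  have h1 : (n:ℝ) ≤ y - 1 := Nat.floor_le (by linarith)
  have h2 : y - 1 < n + 1 := Nat.lt_floor_add_one (y-1)
  set x := y - n with hxdef
  have hx1 : 1 ≤ x := by rw [hxdef]; linarith
  have hx2 : x < 2 := by rw [hxdef]; linarith
  have hxy : x + n = y := by rw [hxdef]; ring
  rw [← hxy, Pf_iter n hx1, Tf_iter n hx1, P_eq_T_Ico x ⟨hx1, hx2⟩]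

lemma Tf_anti {a b : ℝ} (ha : 0 < a) (hab : a ≤ b) : Tf b ≤ Tf a := by
  refine Summable.tsum_le_tsum (fun k => ?_) (summable_aux (by linarith) one_lt_two 1)
    (summable_aux ha one_lt_two 1)
  have hk : (0:ℝ) ≤ k := Nat.cast_nonneg k
  exact one_div_le_one_div_of_le (by positivity) (pow_le_pow_left₀ (by positivity) (by linarith) 2)

lemma Qf_nonpos {x : ℝ} (hx : 1 ≤ x) : Qf x ≤ 0 := by
  refine deriv_nonpos_right (hasDerivAt_Pf (by linarith)) (fun y hy => ?_)
  rw [P_eq_T hx, P_eq_T (by linarith : (1:ℝ) ≤ y)]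
  exact Tf_anti (by linarith) hy.le

lemma Q_one : Qf 1 = - Uf 1 := by
  have key : ∀ x ∈ Ico (1:ℝ) 2, -(Qf x + Uf x) = 0 := by
    refine eq_zero_of_integral_nonpos one_lt_two
      (((contOn_Qf (fun y hy => lt_of_lt_of_le one_pos hy.1)).add contOn_Uf).neg)
      ?_ ?_
    · -- 0 ≤ -(Qf x + Uf x)
      intro x hx
      rw [le_neg, neg_zero]
      have hb : ∀ n : ℕ, Qf x + Uf x ≤ 2/(1+(n:ℝ)) := by
        intro n
        have hx1 : 1 ≤ x := hx.1
        have hQU : Qf x + Uf x = Qf (x + (n+1:ℕ)) + Uf (x + (n+1:ℕ)) := by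
          rw [Qf_iter _ hx1, Uf_iter _ hx1]; ring
        have hgt : (1:ℝ) < x + ((n+1:ℕ):ℝ) := by push_cast; linarith [Nat.cast_nonneg (α := ℝ) n]
        have h1 := Qf_nonpos (le_of_lt hgt)
        have h2 := Uf_le hgt
        have h3 : 2/(x + ((n+1:ℕ):ℝ) - 1) ≤ 2/(1+(n:ℝ)) := by
          have h4 : (1:ℝ)+(n:ℝ) ≤ x + ((n+1:ℕ):ℝ) - 1 := by push_cast; linarith
          gcongr
        linarith [hQU]
      have h2 : Tendsto (fun n : ℕ => 2/(1+(n:ℝ))) atTop (𝓝 0) := by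
        have h1 : Tendsto (fun n : ℕ => 1+(n:ℝ)) atTop atTop :=
          tendsto_atTop_add_const_left _ _ tendsto_natCast_atTop_atTop
        have := h1.inv_tendsto_atTop.const_mul (2:ℝ)
        simp only [mul_zero] at this
        refine this.congr (fun n => by simp [div_eq_mul_inv])
      exact ge_of_tendsto h2 (Eventually.of_forall hb)
    · -- integral ≤ 0
      have hb : ∀ n : ℕ, (∫ x in (1:ℝ)..2, -(Qf x + Uf x)) ≤ 1/(1+(n:ℝ)) := by
        intro n
        set m : ℕ := n + 1 with hm
        have hm0 : (0:ℝ) < 1 + (m:ℝ) := by positivity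
        have hmono : ∀ x ∈ Icc (1:ℝ) 2, -(Qf x + Uf x) ≤ -(Qf (x + m)) := by
          intro x hx
          have hx1 : 1 ≤ x := hx.1
          have hQU : Qf x + Uf x = Qf (x + m) + Uf (x + m) := by
            rw [Qf_iter _ hx1, Uf_iter _ hx1]; ring
          have hU : 0 ≤ Uf (x + m) := Uf_nonneg (pos_of_one_le_add_nat hx1 m)
          linarith
        have hIm : (∫ x in (1:ℝ)..2, -(Qf x + Uf x)) ≤ ∫ x in (1:ℝ)..2, -(Qf (x + m)) := by
          refine intervalIntegral.integral_mono_on one_le_two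
            (ContinuousOn.intervalIntegrable (by rw [uIcc_of_le one_le_two]; exact
              (((contOn_Qf (fun y hy => lt_of_lt_of_le one_pos hy.1)).add contOn_Uf).neg)))
            ?_ hmono
          refine ContinuousOn.intervalIntegrable ?_
          intro x hx
          rw [uIcc_of_le one_le_two] at hx
          exact (((contAt_Qf (by have := Nat.cast_nonneg (α := ℝ) m; linarith [hx.1])).comp
            ((continuous_add_right ((m:ℕ):ℝ)).continuousAt)).neg).continuousWithinAt
        have hshift : (∫ x in (1:ℝ)..2, Qf (x + m)) = ∫ x in (1+(m:ℝ))..(2+(m:ℝ)), Qf x :=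
          intervalIntegral.integral_comp_add_right (fun x => Qf x) (m:ℝ)
        have hval : (∫ x in (1+(m:ℝ))..(2+(m:ℝ)), Qf x) = Tf (2+(m:ℝ)) - Tf (1+(m:ℝ)) := by
          rw [integ_Q hm0 (by linarith), P_eq_T (by linarith), P_eq_T (by linarith)]
        have hTb : Tf (1+(m:ℝ)) ≤ 1/(m:ℝ) := by
          have := Tf_le (show (1:ℝ) < 1+(m:ℝ) by simp [hm]; positivity)
          simpa using this
        have hT2 : 0 ≤ Tf (2+(m:ℝ)) := Tf_nonneg (by linarith)
        have : (∫ x in (1:ℝ)..2, -(Qf (x + m))) ≤ 1/(m:ℝ) := by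
          rw [intervalIntegral.integral_neg, hshift, hval]
          linarith
        refine le_trans hIm (le_trans this (le_of_eq ?_))
        rw [hm]
        push_cast
        ring
      have hten : Tendsto (fun n : ℕ => 1/(1+(n:ℝ))) atTop (𝓝 0) := by
        simp_rw [one_div]
        exact Tendsto.inv_tendsto_atTop (tendsto_atTop_add_const_left _ _ tendsto_natCast_atTop_atTop)
      exact ge_of_tendsto hten (Eventually.of_forall hb)
  have h1 := key 1 ⟨le_rfl, one_lt_two⟩
  linarith

end Main


lemma zeta3_re : (riemannZeta 3).re = ∑' k : ℕ, 1/((1:ℝ)+k)^3 := by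
  rw [zeta_eq_tsum_one_div_nat_cpow (by norm_num : 1 < (3:ℂ).re)]
  have hc : ∀ n : ℕ, (1:ℂ)/(n:ℂ)^(3:ℂ) = ((1/(n:ℝ)^3 : ℝ) : ℂ) := by
    intro n
    rw [show (3:ℂ) = ((3:ℕ):ℂ) by norm_num, Complex.cpow_natCast]
    push_cast
    ring
  rw [tsum_congr hc, ← Complex.ofReal_tsum, Complex.ofReal_re]
  have hs : Summable (fun n : ℕ => 1/(n:ℝ)^3) := Real.summable_one_div_nat_pow.mpr (by norm_num)
  rw [Summable.tsum_eq_zero_add hs]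
  norm_num
  exact tsum_congr (fun k => by push_cast; ring_nf)

lemma T_one : Tf 1 = π^2/6 := by
  have h := hasSum_zeta_two.tsum_eq
  rw [Summable.tsum_eq_zero_add hasSum_zeta_two.summable] at h
  rw [Tf, ← h]
  norm_num
  exact tsum_congr (fun k => by push_cast; ring_nf)

lemma U_one : Uf 1 = 2 * (riemannZeta 3).re := by
  rw [Uf, zeta3_re, ← tsum_mul_left]
  exact tsum_congr (fun k => by ring)

theorem I_three_eq :
    -(∫ v in Set.Ioi (0 : ℝ), (Real.log v) ^ 3 * Real.exp (-v))
      = 2 * (riemannZeta 3).re + Real.eulerMascheroniConstant ^ 3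
        + Real.eulerMascheroniConstant * π ^ 2 / 2 := by
  have hg0 : gI 0 1 = 1 := by rw [gI_zero_eq_Gamma one_pos, Real.Gamma_one]
  have hg1 : gI 1 1 = -Real.eulerMascheroniConstant := gI_one_one
  have hP : Pf 1 = π^2/6 := by rw [P_eq_T le_rfl, T_one]
  have hQ : Qf 1 = -(2 * (riemannZeta 3).re) := by rw [Q_one, U_one]
  have hg2 : gI 2 1 = π^2/6 + Real.eulerMascheroniConstant^2 := by
    rw [Pf, hg0, hg1] at hP
    norm_num at hP
    linarith
  have hg3 : gI 3 1 = -(2*(riemannZeta 3).re) - Real.eulerMascheroniConstant^3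
      - Real.eulerMascheroniConstant*π^2/2 := by
    rw [Qf, hg0, hg1, hg2] at hQ
    norm_num at hQ
    nlinarith [hQ]
  have hint : (∫ v in Set.Ioi (0:ℝ), (Real.log v)^3 * Real.exp (-v)) = gI 3 1 := by
    rw [gI]
    refine setIntegral_congr_fun measurableSet_Ioi (fun t ht => ?_)
    norm_num
  rw [hint, hg3]
  ring
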